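/- Let G be a directed partially ordered group and n ≥ 1, and let E = Γ(ℤ ⃗× G, (n,0)) be the interval pseudo-effect algebra in the lexicographic product ℤ ⃗× G with strong unit (n,0). Then E is an n-perfect pseudo-effect algebra, with n-decomposition E₀ = {(0,g) : g ∈ G⁺}, Eᵢ = {(i,g) : g ∈ G} for 1 ≤ i ≤ n−1, and Eₙ = {(n,−g) : g ∈ G⁺}. -/

import Mathlib

/-- A pseudo-effect algebra (PEA): a structure with a partial addition `add`
(with domain of definition `D`), a zero and a one, satisfying (PE1)-(PE4)
together with the (derivable) neutrality of zero. -/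
structure PEA (E : Type) where
  /-- `D a b` means that the partial sum `a + b` is defined. -/
  D : E → E → Prop
  /-- The partial addition (its value is relevant only when `D a b` holds). -/
  add : E → E → E
  zero : E
  one : E
  /-- (PE1), definedness part. -/
  assoc_defined : ∀ a b c, (D a b ∧ D (add a b) c) ↔ (D b c ∧ D a (add b c))
  /-- (PE1), equality part. -/
  assoc_eq : ∀ a b c, D a b → D (add a b) c → add (add a b) c = add a (add b c)
  /-- (PE2), right complement. -/
  compl_right : ∀ a, ∃! d, D a d ∧ add a d = one
  /-- (PE2), left complement. -/
  compl_left : ∀ a, ∃! e, D e a ∧ add e a = one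
  /-- (PE3). -/
  pe3 : ∀ a b, D a b →
    (∃ d, D d a ∧ add d a = add a b) ∧ (∃ e, D b e ∧ add b e = add a b)
  /-- (PE4). -/
  pe4_right : ∀ a, D a one → a = zero
  pe4_left : ∀ a, D one a → a = zero
  D_zero_right : ∀ a, D a zero
  D_zero_left : ∀ a, D zero a
  add_zero : ∀ a, add a zero = a
  zero_add : ∀ a, add zero a = a

namespace PEA

variable {E : Type} (P : PEA E)

/-- The induced partial order: `a ≤ b` iff `a + c = b` for some `c`. -/
def le (a b : E) : Prop := ∃ c, P.D a c ∧ P.add a c = b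

/-- The left complement `a⁻`, the unique element with `a⁻ + a = 1`. -/
noncomputable def lneg (a : E) : E := (P.compl_left a).choose

/-- The right complement `a~`, the unique element with `a + a~ = 1`. -/
noncomputable def rneg (a : E) : E := (P.compl_right a).choose

/-- `E` is weakly commutative if `a + b` is defined iff `b + a` is defined. -/
def WeaklyCommutative : Prop := ∀ a b, P.D a b ↔ P.D b a

/-- `E` is symmetric if the two complements coincide. -/
def Symmetric : Prop := ∀ a, P.lneg a = P.rneg a

/-- A state on a PEA: a `[0,1]`-valued map, additive on existing sums, sending
`0 ↦ 0` and `1 ↦ 1`. -/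
def IsState (s : E → ℝ) : Prop :=
  s P.zero = 0 ∧ s P.one = 1 ∧ (∀ a, 0 ≤ s a ∧ s a ≤ 1) ∧
    ∀ a b, P.D a b → s (P.add a b) = s a + s b

/-- An `(n+1)`-valued discrete state: a state whose range is `{0, 1/n, …, 1}`. -/
def IsDiscreteState (n : ℕ) (s : E → ℝ) : Prop :=
  P.IsState s ∧ Set.range s = {x : ℝ | ∃ i ≤ n, x = (i : ℝ) / n}

/-- An ideal: a nonempty downward closed subset closed under existing sums. -/
def IsIdeal (I : Set E) : Prop :=
  I.Nonempty ∧ (∀ a i, i ∈ I → P.le a i → a ∈ I) ∧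
    ∀ i j, i ∈ I → j ∈ I → P.D i j → P.add i j ∈ I

/-- A normal ideal: `a + i = j + a` implies `i ∈ I ↔ j ∈ I`. -/
def IsNormalIdeal (I : Set E) : Prop :=
  P.IsIdeal I ∧ ∀ a i j, P.D a i → P.D j a → P.add a i = P.add j a → (i ∈ I ↔ j ∈ I)

/-- A maximal ideal: proper and not properly contained in a proper ideal. -/
def IsMaximalIdeal (I : Set E) : Prop :=
  P.IsIdeal I ∧ P.one ∉ I ∧ ∀ J, P.IsIdeal J → P.one ∉ J → I ⊆ J → I = J

/-- `n`-fold partial multiple of an element. -/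
def nmul : ℕ → E → E
  | 0, _ => P.zero
  | k + 1, a => P.add (nmul k a) a

/-- Definedness of the `n`-fold partial multiple. -/
def nmulD : ℕ → E → Prop
  | 0, _ => True
  | k + 1, a => nmulD k a ∧ P.D (P.nmul k a) a

/-- The set of elements of infinite isotropic index. -/
def Infinit : Set E := {a | ∀ k, P.nmulD k a}

/-- An `n`-decomposition of a PEA. -/
def IsNDecomp (n : ℕ) (F : ℕ → Set E) : Prop :=
  (∀ i, i ≤ n → (F i).Nonempty) ∧
  (∀ i j, i ≤ n → j ≤ n → i ≠ j → F i ∩ F j = ∅) ∧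
  ((⋃ i ∈ Set.Iic n, F i) = Set.univ) ∧
  (∀ i, i ≤ n → P.lneg '' F i = F (n - i) ∧ P.rneg '' F i = F (n - i)) ∧
  (∀ i j, i ≤ n → j ≤ n → ∀ x ∈ F i, ∀ y ∈ F j, P.D x y →
     i + j ≤ n ∧ P.add x y ∈ F (i + j))

/-- An `n`-perfect PEA: an `n`-decomposition with all sums `Eᵢ + Eⱼ`, `i+j < n`,
existing, and whose bottom slice is the unique maximal ideal. -/
def IsNPerfect (n : ℕ) (F : ℕ → Set E) : Prop :=
  P.IsNDecomp n F ∧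
  (∀ i j, i + j < n → ∀ x ∈ F i, ∀ y ∈ F j, P.D x y) ∧
  (P.IsMaximalIdeal (F 0) ∧ ∀ J, P.IsMaximalIdeal J → J = F 0)

end PEA

set_option linter.unusedSectionVars false
section IntervalPEA

variable {H : Type} [AddGroup H] [PartialOrder H]
  [CovariantClass H H (· + ·) (· ≤ ·)]
  [CovariantClass H H (Function.swap (· + ·)) (· ≤ ·)]

/-- The carrier of the interval `Γ(H, u) = [0, u]` in a po-group `H`. -/
def GammaSet (u : H) : Type := {x : H // 0 ≤ x ∧ x ≤ u}

namespace GammaInterval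

variable (u : H) (hu : 0 ≤ u)

/-- Definedness of the partial addition of `Γ(H,u)`. -/
def gD (a b : GammaSet u) : Prop := a.1 + b.1 ≤ u

open Classical in
/-- The partial addition of `Γ(H,u)` (junk value `0` outside its domain). -/
noncomputable def gadd (a b : GammaSet u) : GammaSet u :=
  if h : a.1 + b.1 ≤ u then ⟨a.1 + b.1, add_nonneg a.2.1 b.2.1, h⟩
  else ⟨0, le_refl 0, hu⟩

lemma gadd_val {a b : GammaSet u} (h : gD u a b) :
    (gadd u hu a b).1 = a.1 + b.1 := by
  have h' : a.1 + b.1 ≤ u := h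
  simp only [gadd]
  first | rw [dif_pos h'] | simp [h']

/-- The interval `Γ(H, u)` as a pseudo-effect algebra. -/
noncomputable def Gamma : PEA (GammaSet u) where
  D := gD u
  add := gadd u hu
  zero := ⟨0, le_refl 0, hu⟩
  one := ⟨u, hu, le_refl u⟩
  assoc_defined := by
    intro a b c
    constructor
    · rintro ⟨h1, h2⟩
      have h2a : (gadd u hu a b).1 + c.1 ≤ u := h2
      have h2' : a.1 + b.1 + c.1 ≤ u := by rwa [gadd_val u hu h1] at h2a
      have h3 : a.1 + (b.1 + c.1) ≤ u := by rwa [← add_assoc]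
      have hbc : gD u b c := le_trans (le_add_of_nonneg_left a.2.1) h3
      refine ⟨hbc, ?_⟩
      show a.1 + (gadd u hu b c).1 ≤ u
      rwa [gadd_val u hu hbc]
    · rintro ⟨h1, h2⟩
      have h2a : a.1 + (gadd u hu b c).1 ≤ u := h2
      have h2' : a.1 + (b.1 + c.1) ≤ u := by rwa [gadd_val u hu h1] at h2a
      have hab : gD u a b :=
        le_trans (add_le_add_right (le_add_of_nonneg_right c.2.1) a.1) h2'
      refine ⟨hab, ?_⟩
      show (gadd u hu a b).1 + c.1 ≤ u
      rw [gadd_val u hu hab, add_assoc]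
      exact h2'
  assoc_eq := by
    intro a b c h1 h2
    have h2' : a.1 + b.1 + c.1 ≤ u := by
      have h2a : (gadd u hu a b).1 + c.1 ≤ u := h2
      rwa [gadd_val u hu h1] at h2a
    have h3 : a.1 + (b.1 + c.1) ≤ u := by rwa [← add_assoc]
    have hbc : gD u b c := le_trans (le_add_of_nonneg_left a.2.1) h3
    have habc : gD u a (gadd u hu b c) := by
      show a.1 + (gadd u hu b c).1 ≤ u
      rwa [gadd_val u hu hbc]
    apply Subtype.ext
    rw [gadd_val u hu h2, gadd_val u hu h1, gadd_val u hu habc, gadd_val u hu hbc,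
      add_assoc]
  compl_right := by
    intro a
    have h1 : (0 : H) ≤ -a.1 + u := by
      rw [le_neg_add_iff_add_le, add_zero]; exact a.2.2
    have h2 : -a.1 + u ≤ u := by
      simpa using add_le_add_right (neg_nonpos.mpr a.2.1) u
    have hD : gD u a ⟨-a.1 + u, h1, h2⟩ := by
      show a.1 + (-a.1 + u) ≤ u
      rw [add_neg_cancel_left]
    refine ⟨⟨-a.1 + u, h1, h2⟩, ⟨hD, ?_⟩, ?_⟩
    · apply Subtype.ext
      rw [gadd_val u hu hD]
      exact add_neg_cancel_left a.1 u
    · rintro y ⟨hy1, hy2⟩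
      apply Subtype.ext
      have hv := congrArg Subtype.val hy2
      rw [gadd_val u hu hy1] at hv
      show y.1 = -a.1 + u
      rw [eq_neg_add_iff_add_eq]
      exact hv
  compl_left := by
    intro a
    have h1 : (0 : H) ≤ u + -a.1 := by
      simpa using add_le_add_right a.2.2 (-a.1)
    have h2 : u + -a.1 ≤ u := by
      simpa using add_le_add_left (neg_nonpos.mpr a.2.1) u
    have hD : gD u ⟨u + -a.1, h1, h2⟩ a := by
      show (u + -a.1) + a.1 ≤ u
      rw [neg_add_cancel_right]
    refine ⟨⟨u + -a.1, h1, h2⟩, ⟨hD, ?_⟩, ?_⟩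
    · apply Subtype.ext
      rw [gadd_val u hu hD]
      exact neg_add_cancel_right u a.1
    · rintro y ⟨hy1, hy2⟩
      apply Subtype.ext
      have hv := congrArg Subtype.val hy2
      rw [gadd_val u hu hy1] at hv
      show y.1 = u + -a.1
      rw [eq_add_neg_iff_add_eq]
      exact hv
  pe3 := by
    intro a b h
    constructor
    · have h1 : (0 : H) ≤ a.1 + b.1 + -a.1 := by
        have : a.1 + 0 + -a.1 ≤ a.1 + b.1 + -a.1 :=
          add_le_add_left (add_le_add_right b.2.1 a.1) (-a.1)
        simpa using this
      have h2 : a.1 + b.1 + -a.1 ≤ u := by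
        calc a.1 + b.1 + -a.1 ≤ u + -a.1 := add_le_add_left h (-a.1)
          _ ≤ u + 0 := add_le_add_right (neg_nonpos.mpr a.2.1) u
          _ = u := add_zero u
      have hD : gD u ⟨a.1 + b.1 + -a.1, h1, h2⟩ a := by
        show (a.1 + b.1 + -a.1) + a.1 ≤ u
        rw [neg_add_cancel_right]
        exact h
      refine ⟨⟨a.1 + b.1 + -a.1, h1, h2⟩, hD, ?_⟩
      apply Subtype.ext
      rw [gadd_val u hu hD, gadd_val u hu h]
      exact neg_add_cancel_right (a.1 + b.1) a.1
    · have h1 : (0 : H) ≤ -b.1 + (a.1 + b.1) := by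
        have : -b.1 + b.1 ≤ -b.1 + (a.1 + b.1) :=
          add_le_add_right (le_add_of_nonneg_left a.2.1) (-b.1)
        simpa using this
      have h2 : -b.1 + (a.1 + b.1) ≤ u := by
        calc -b.1 + (a.1 + b.1) ≤ -b.1 + u := add_le_add_right h (-b.1)
          _ ≤ 0 + u := add_le_add_left (neg_nonpos.mpr b.2.1) u
          _ = u := zero_add u
      have hD : gD u b ⟨-b.1 + (a.1 + b.1), h1, h2⟩ := by
        show b.1 + (-b.1 + (a.1 + b.1)) ≤ u
        rw [add_neg_cancel_left]
        exact h
      refine ⟨⟨-b.1 + (a.1 + b.1), h1, h2⟩, hD, ?_⟩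
      apply Subtype.ext
      rw [gadd_val u hu hD, gadd_val u hu h]
      exact add_neg_cancel_left b.1 (a.1 + b.1)
  pe4_right := by
    intro a h
    apply Subtype.ext
    have h' : a.1 + u ≤ u := h
    have h'' : a.1 + u + -u ≤ u + -u := add_le_add_left h' (-u)
    simp only [add_neg_cancel_right, add_neg_cancel] at h''
    exact le_antisymm h'' a.2.1
  pe4_left := by
    intro a h
    apply Subtype.ext
    have h' : u + a.1 ≤ u := h
    have h'' : -u + (u + a.1) ≤ -u + u := add_le_add_right h' (-u)
    simp only [neg_add_cancel_left, neg_add_cancel] at h''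
    exact le_antisymm h'' a.2.1
  D_zero_right := by
    intro a
    show a.1 + 0 ≤ u
    simpa using a.2.2
  D_zero_left := by
    intro a
    show 0 + a.1 ≤ u
    simpa using a.2.2
  add_zero := by
    intro a
    apply Subtype.ext
    have h : gD u a ⟨0, le_refl 0, hu⟩ := by
      show a.1 + 0 ≤ u; simpa using a.2.2
    rw [gadd_val u hu h]
    exact add_zero a.1
  zero_add := by
    intro a
    apply Subtype.ext
    have h : gD u ⟨0, le_refl 0, hu⟩ a := by
      show 0 + a.1 ≤ u; simpa using a.2.2
    rw [gadd_val u hu h]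
    exact zero_add a.1

end GammaInterval

end IntervalPEA

section ZLexSection

/-- The lexicographic product `ℤ ⃗× G`. -/
def ZLex (G : Type) : Type := ℤ × G

namespace ZLex

variable {G : Type} [AddGroup G] [PartialOrder G]
  [CovariantClass G G (· + ·) (· ≤ ·)]
  [CovariantClass G G (Function.swap (· + ·)) (· ≤ ·)]

instance : AddGroup (ZLex G) := inferInstanceAs (AddGroup (ℤ × G))

/-- Build an element of `ℤ ⃗× G`. -/
def mk (i : ℤ) (g : G) : ZLex G := ((i, g) : ℤ × G)

/-- First (integer) component. -/
def idx (x : ZLex G) : ℤ := (x : ℤ × G).1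

/-- Second (group) component. -/
def snd (x : ZLex G) : G := (x : ℤ × G).2

instance : PartialOrder (ZLex G) where
  le p q := idx p < idx q ∨ (idx p = idx q ∧ snd p ≤ snd q)
  le_refl p := Or.inr ⟨rfl, le_refl _⟩
  le_trans p q r := by
    rintro (h | ⟨e, h⟩) (h' | ⟨e', h'⟩)
    · exact Or.inl (lt_trans h h')
    · exact Or.inl (lt_of_lt_of_eq h e')
    · exact Or.inl (lt_of_eq_of_lt e h')
    · exact Or.inr ⟨e.trans e', le_trans h h'⟩
  le_antisymm p q := by
    rintro (h | ⟨e, h⟩) (h' | ⟨e', h'⟩)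
    · exact absurd (lt_trans h h') (lt_irrefl _)
    · exact absurd h (by rw [e']; exact lt_irrefl _)
    · exact absurd h' (by rw [e]; exact lt_irrefl _)
    · have h2 : snd p = snd q := le_antisymm h h'
      show ((idx p, snd p) : ℤ × G) = ((idx q, snd q) : ℤ × G)
      rw [e, h2]

lemma le_def (p q : ZLex G) :
    p ≤ q ↔ idx p < idx q ∨ (idx p = idx q ∧ snd p ≤ snd q) := Iff.rfl

lemma add_def (p q : ZLex G) :
    p + q = mk (idx p + idx q) (snd p + snd q) := rfl

instance : CovariantClass (ZLex G) (ZLex G) (· + ·) (· ≤ ·) := by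
  constructor
  rintro c a b (h | ⟨e, h⟩)
  · exact Or.inl (Int.add_lt_add_left h _)
  · exact Or.inr ⟨by show idx c + idx a = idx c + idx b; rw [e],
      add_le_add_right h _⟩

instance : CovariantClass (ZLex G) (ZLex G) (Function.swap (· + ·)) (· ≤ ·) := by
  constructor
  rintro c a b (h | ⟨e, h⟩)
  · exact Or.inl (Int.add_lt_add_right h _)
  · exact Or.inr ⟨by show idx a + idx c = idx b + idx c; rw [e],
      add_le_add_left h _⟩

end ZLex

end ZLexSection


section GammaHelpers

variable {H : Type} [AddGroup H] [PartialOrder H]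
  [CovariantClass H H (· + ·) (· ≤ ·)]
  [CovariantClass H H (Function.swap (· + ·)) (· ≤ ·)]
  (u : H) (hu : 0 ≤ u)

namespace GammaInterval

lemma lneg_val (a : GammaSet u) :
    ((Gamma u hu).lneg a).1 = u + -a.1 := by
  have h1 : (0 : H) ≤ u + -a.1 := by simpa using add_le_add_right a.2.2 (-a.1)
  have h2 : u + -a.1 ≤ u := by simpa using add_le_add_left (neg_nonpos.mpr a.2.1) u
  have hD : gD u (⟨u + -a.1, h1, h2⟩ : GammaSet u) a := by
    show (u + -a.1) + a.1 ≤ u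
    rw [neg_add_cancel_right]
  have hspec := ((Gamma u hu).compl_left a).choose_spec
  have heq : (⟨u + -a.1, h1, h2⟩ : GammaSet u) = ((Gamma u hu).compl_left a).choose := by
    apply hspec.2
    refine ⟨hD, ?_⟩
    apply Subtype.ext
    show (gadd u hu _ a).1 = u
    rw [gadd_val u hu hD]
    exact neg_add_cancel_right u a.1
  show (((Gamma u hu).compl_left a).choose).1 = u + -a.1
  rw [← heq]

lemma rneg_val (a : GammaSet u) :
    ((Gamma u hu).rneg a).1 = -a.1 + u := by
  have h1 : (0 : H) ≤ -a.1 + u := by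
    rw [le_neg_add_iff_add_le, add_zero]; exact a.2.2
  have h2 : -a.1 + u ≤ u := by simpa using add_le_add_right (neg_nonpos.mpr a.2.1) u
  have hD : gD u a (⟨-a.1 + u, h1, h2⟩ : GammaSet u) := by
    show a.1 + (-a.1 + u) ≤ u
    rw [add_neg_cancel_left]
  have hspec := ((Gamma u hu).compl_right a).choose_spec
  have heq : (⟨-a.1 + u, h1, h2⟩ : GammaSet u) = ((Gamma u hu).compl_right a).choose := by
    apply hspec.2
    refine ⟨hD, ?_⟩
    apply Subtype.ext
    show (gadd u hu a _).1 = u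
    rw [gadd_val u hu hD]
    exact add_neg_cancel_left a.1 u
  show (((Gamma u hu).compl_right a).choose).1 = -a.1 + u
  rw [← heq]

lemma le_iff (x y : GammaSet u) :
    (Gamma u hu).le x y ↔ x.1 ≤ y.1 := by
  constructor
  · rintro ⟨c, hD, heq⟩
    have hv : (gadd u hu x c).1 = y.1 := congrArg Subtype.val heq
    rw [gadd_val u hu hD] at hv
    calc x.1 = x.1 + 0 := (add_zero _).symm
      _ ≤ x.1 + c.1 := add_le_add_right c.2.1 _
      _ = y.1 := hv
  · intro hxy
    have h1 : (0 : H) ≤ -x.1 + y.1 := by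
      rw [le_neg_add_iff_add_le, add_zero]; exact hxy
    have h2 : -x.1 + y.1 ≤ u := by
      calc -x.1 + y.1 ≤ 0 + y.1 := add_le_add_left (neg_nonpos.mpr x.2.1) _
        _ = y.1 := zero_add _
        _ ≤ u := y.2.2
    have hD : gD u x (⟨-x.1 + y.1, h1, h2⟩ : GammaSet u) := by
      show x.1 + (-x.1 + y.1) ≤ u
      rw [add_neg_cancel_left]; exact y.2.2
    refine ⟨⟨-x.1 + y.1, h1, h2⟩, hD, ?_⟩
    apply Subtype.ext
    show (gadd u hu x _).1 = y.1
    rw [gadd_val u hu hD]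
    exact add_neg_cancel_left x.1 y.1

end GammaInterval

end GammaHelpers


theorem aux15 (G : Type) [AddGroup G] [PartialOrder G]
    [CovariantClass G G (· + ·) (· ≤ ·)]
    [CovariantClass G G (Function.swap (· + ·)) (· ≤ ·)]
    (hdir : ∀ a b : G, ∃ c : G, a ≤ c ∧ b ≤ c)
    (n : ℕ) (hn : 1 ≤ n)
    (hu : (0 : ZLex G) ≤ ZLex.mk (n : ℤ) (0 : G)) :
    (GammaInterval.Gamma (ZLex.mk (n : ℤ) (0 : G)) hu).IsNPerfect n
      (fun i => {x : GammaSet (ZLex.mk (n : ℤ) (0 : G)) | ZLex.idx x.1 = (i : ℤ)}) := by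
  set U : ZLex G := ZLex.mk (n : ℤ) (0 : G) with hUdef
  -- basic facts
  have hmem_lower : ∀ x : GammaSet U, 0 ≤ ZLex.idx x.1 := by
    intro x
    rcases x.2.1 with h | ⟨h, _⟩
    · exact le_of_lt h
    · exact le_of_eq h
  have hmem_upper : ∀ x : GammaSet U, ZLex.idx x.1 ≤ (n : ℤ) := by
    intro x
    rcases x.2.2 with h | ⟨h, _⟩
    · exact le_of_lt h
    · exact le_of_eq h
  have hsnd_top : ∀ x : GammaSet U, ZLex.idx x.1 = (n : ℤ) → ZLex.snd x.1 ≤ 0 := by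
    intro x hx
    rcases x.2.2 with h | ⟨_, h⟩
    · exfalso; have h' : ZLex.idx x.1 < (n : ℤ) := h; omega
    · exact h
  have hmk : ∀ i : ℕ, i ≤ n →
      (0 : ZLex G) ≤ ZLex.mk (i : ℤ) 0 ∧ ZLex.mk (i : ℤ) 0 ≤ U := by
    intro i hi
    constructor
    · rcases Nat.eq_zero_or_pos i with h | h
      · subst h; exact Or.inr ⟨rfl, le_refl _⟩
      · exact Or.inl (show (0 : ℤ) < (i : ℤ) by exact_mod_cast h)
    · rcases eq_or_lt_of_le hi with h | h
      · subst h; exact Or.inr ⟨rfl, le_refl _⟩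
      · exact Or.inl (show (i : ℤ) < (n : ℤ) by exact_mod_cast h)
  -- key lemma: an ideal containing an element with positive index contains one
  have key : ∀ J, (GammaInterval.Gamma U hu).IsIdeal J →
      ∀ a ∈ J, 1 ≤ ZLex.idx a.1 → (GammaInterval.Gamma U hu).one ∈ J := by
    intro J hJ a ha hia
    have hian : ZLex.idx a.1 ≤ (n : ℤ) := hmem_upper a
    have hb1 : (0 : ZLex G) ≤ ZLex.mk 1 (ZLex.snd a.1) :=
      Or.inl (show (0 : ℤ) < 1 by norm_num)
    have hb2 : ZLex.mk 1 (ZLex.snd a.1) ≤ U := by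
      rcases eq_or_lt_of_le hn with h | h
      · have hai : ZLex.idx a.1 = (n : ℤ) := by omega
        exact Or.inr ⟨show (1 : ℤ) = (n : ℤ) by omega, hsnd_top a hai⟩
      · exact Or.inl (show (1 : ℤ) < (n : ℤ) by exact_mod_cast h)
    set b : GammaSet U := ⟨ZLex.mk 1 (ZLex.snd a.1), hb1, hb2⟩ with hbdef
    have hbJ : b ∈ J := by
      refine hJ.2.1 b a ha ?_
      rw [GammaInterval.le_iff]
      rcases eq_or_lt_of_le hia with h | h
      · exact Or.inr ⟨h, le_refl _⟩
      · exact Or.inl h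
    rcases eq_or_lt_of_le hn with h1n | h1n
    · -- n = 1
      have hai : ZLex.idx a.1 = (n : ℤ) := by omega
      have hsa : ZLex.snd a.1 ≤ 0 := hsnd_top a hai
      have hc1 : (0 : ZLex G) ≤ ZLex.mk 0 (-ZLex.snd a.1) :=
        Or.inr ⟨rfl, neg_nonneg.mpr hsa⟩
      have hc2 : ZLex.mk 0 (-ZLex.snd a.1) ≤ U :=
        Or.inl (show (0 : ℤ) < (n : ℤ) by omega)
      set c : GammaSet U := ⟨ZLex.mk 0 (-ZLex.snd a.1), hc1, hc2⟩ with hcdef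
      have hcJ : c ∈ J := by
        refine hJ.2.1 c b hbJ ?_
        rw [GammaInterval.le_iff]
        exact Or.inl (show (0 : ℤ) < 1 by norm_num)
      have hval : b.1 + c.1 = U := by
        show ZLex.mk ((1 : ℤ) + 0) (ZLex.snd a.1 + -ZLex.snd a.1) = ZLex.mk (n : ℤ) 0
        rw [add_neg_cancel]
        have h1 : (1 : ℤ) + 0 = (n : ℤ) := by omega
        rw [h1]
      have hD : GammaInterval.gD U b c := le_of_eq hval
      have hmem := hJ.2.2 b c hbJ hcJ hD
      have hone : (GammaInterval.Gamma U hu).add b c = (GammaInterval.Gamma U hu).one :=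
        Subtype.ext ((GammaInterval.gadd_val U hu hD).trans hval)
      rwa [hone] at hmem
    · -- 1 < n
      have hslice : ∀ k : ℕ, k ≤ n → ∀ x : GammaSet U, ZLex.idx x.1 = (k : ℤ) → x ∈ J := by
        intro k
        induction k with
        | zero =>
          intro _ x hx
          refine hJ.2.1 x b hbJ ?_
          rw [GammaInterval.le_iff]
          exact Or.inl (show ZLex.idx x.1 < 1 by rw [hx]; norm_num)
        | succ k ih =>
          intro hk x hx
          have hkn : k ≤ n := by omega
          set y : GammaSet U := ⟨ZLex.mk (k : ℤ) 0, (hmk k hkn).1, (hmk k hkn).2⟩ with hydef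
          have hyJ : y ∈ J := ih (by omega) y rfl
          set g : G := ZLex.snd x.1 with hgdef
          have hz1 : (0 : ZLex G) ≤ ZLex.mk 1 g := Or.inl (show (0 : ℤ) < 1 by norm_num)
          have hz2 : ZLex.mk 1 g ≤ U := Or.inl (show (1 : ℤ) < (n : ℤ) by exact_mod_cast h1n)
          set z : GammaSet U := ⟨ZLex.mk 1 g, hz1, hz2⟩ with hzdef
          obtain ⟨h0, hh1, hh2⟩ := hdir (-ZLex.snd a.1 + g) 0
          have hc1 : (0 : ZLex G) ≤ ZLex.mk 0 h0 := Or.inr ⟨rfl, hh2⟩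
          have hc2 : ZLex.mk 0 h0 ≤ U := Or.inl (show (0 : ℤ) < (n : ℤ) by omega)
          set c : GammaSet U := ⟨ZLex.mk 0 h0, hc1, hc2⟩ with hcdef
          have hcJ : c ∈ J := by
            refine hJ.2.1 c b hbJ ?_
            rw [GammaInterval.le_iff]
            exact Or.inl (show (0 : ℤ) < 1 by norm_num)
          have hDbc : GammaInterval.gD U b c :=
            Or.inl (show (1 : ℤ) + 0 < (n : ℤ) by
              have : (1 : ℤ) < (n : ℤ) := by exact_mod_cast h1n
              omega)
          have hdJ : (GammaInterval.Gamma U hu).add b c ∈ J := hJ.2.2 b c hbJ hcJ hDbc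
          have hdval : ((GammaInterval.Gamma U hu).add b c).1 =
              ZLex.mk ((1 : ℤ) + 0) (ZLex.snd a.1 + h0) := GammaInterval.gadd_val U hu hDbc
          have hzJ : z ∈ J := by
            refine hJ.2.1 z _ hdJ ?_
            rw [GammaInterval.le_iff, hdval]
            refine Or.inr ⟨show (1 : ℤ) = 1 + 0 by ring, ?_⟩
            show g ≤ ZLex.snd a.1 + h0
            have h := add_le_add_right hh1 (ZLex.snd a.1)
            rwa [add_neg_cancel_left] at h
          have hyz : y.1 + z.1 = x.1 := by
            show ZLex.mk ((k : ℤ) + 1) ((0 : G) + g) = x.1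
            have h1 : (k : ℤ) + 1 = ZLex.idx x.1 := by rw [hx]; push_cast; ring
            have h2 : (0 : G) + g = ZLex.snd x.1 := zero_add g
            rw [h1, h2]
            rfl
          have hDyz : GammaInterval.gD U y z := by
            show y.1 + z.1 ≤ U
            rw [hyz]; exact x.2.2
          have hmem := hJ.2.2 y z hyJ hzJ hDyz
          have heq : (GammaInterval.Gamma U hu).add y z = x :=
            Subtype.ext ((GammaInterval.gadd_val U hu hDyz).trans hyz)
          rwa [heq] at hmem
      exact hslice n le_rfl _ rfl
  -- F 0 is an ideal
  have hF0ideal : (GammaInterval.Gamma U hu).IsIdeal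
      {x : GammaSet U | ZLex.idx x.1 = ((0 : ℕ) : ℤ)} := by
    refine ⟨⟨⟨(0 : ZLex G), le_refl _, hu⟩, by show (0 : ℤ) = ((0 : ℕ) : ℤ); simp⟩, ?_, ?_⟩
    · intro x i0 hi0 hle
      rw [GammaInterval.le_iff] at hle
      have h1 : 0 ≤ ZLex.idx x.1 := hmem_lower x
      have h2 : ZLex.idx i0.1 = ((0 : ℕ) : ℤ) := hi0
      show ZLex.idx x.1 = ((0 : ℕ) : ℤ)
      rcases hle with h | ⟨h, _⟩
      · omega
      · omega
    · intro i j hi hj hD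
      have hi' : ZLex.idx i.1 = ((0 : ℕ) : ℤ) := hi
      have hj' : ZLex.idx j.1 = ((0 : ℕ) : ℤ) := hj
      show ZLex.idx (GammaInterval.gadd U hu i j).1 = ((0 : ℕ) : ℤ)
      rw [GammaInterval.gadd_val U hu hD]
      show ZLex.idx i.1 + ZLex.idx j.1 = ((0 : ℕ) : ℤ)
      omega
  have honeF0 : (GammaInterval.Gamma U hu).one ∉
      {x : GammaSet U | ZLex.idx x.1 = ((0 : ℕ) : ℤ)} := by
    intro h
    have h' : (n : ℤ) = ((0 : ℕ) : ℤ) := h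
    omega
  refine ⟨⟨?_, ?_, ?_, ?_, ?_⟩, ?_, ?_, ?_⟩
  · -- nonempty slices
    intro i hi
    exact ⟨⟨ZLex.mk (i : ℤ) 0, (hmk i hi).1, (hmk i hi).2⟩, rfl⟩
  · -- disjoint
    intro i j hi hj hne
    rw [Set.eq_empty_iff_forall_notMem]
    rintro x ⟨h1, h2⟩
    have h1' : ZLex.idx x.1 = (i : ℤ) := h1
    have h2' : ZLex.idx x.1 = (j : ℤ) := h2
    exact hne (by omega)
  · -- union
    ext x
    simp only [Set.mem_iUnion, Set.mem_Iic, Set.mem_setOf_eq, Set.mem_univ, iff_true]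
    refine ⟨(ZLex.idx x.1).toNat, ?_, ?_⟩
    · have := hmem_upper x; have := hmem_lower x; omega
    · have := hmem_lower x; omega
  · -- complements
    intro i hi
    have hni : ((n - i : ℕ) : ℤ) = (n : ℤ) - (i : ℤ) := by omega
    constructor
    · ext y
      simp only [Set.mem_image, Set.mem_setOf_eq]
      constructor
      · rintro ⟨x, hx, rfl⟩
        have hv : ZLex.idx ((GammaInterval.Gamma U hu).lneg x).1 =
            (n : ℤ) + -(ZLex.idx x.1) := by
          rw [GammaInterval.lneg_val U hu]; rfl
        rw [hv, hx]
        omega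
      · intro hy
        have h1 : (0 : ZLex G) ≤ -y.1 + U := by
          rw [le_neg_add_iff_add_le, add_zero]; exact y.2.2
        have h2 : -y.1 + U ≤ U := by
          simpa using add_le_add_right (neg_nonpos.mpr y.2.1) U
        refine ⟨⟨-y.1 + U, h1, h2⟩, ?_, ?_⟩
        · show ZLex.idx (-y.1 + U) = (i : ℤ)
          have hv : ZLex.idx (-y.1 + U) = -(ZLex.idx y.1) + (n : ℤ) := rfl
          have hy' : ZLex.idx y.1 = ((n - i : ℕ) : ℤ) := hy
          rw [hv, hy']
          omega
        · apply Subtype.ext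
          refine (GammaInterval.lneg_val U hu _).trans ?_
          show U + -(-y.1 + U) = y.1
          rw [neg_add_rev, neg_neg, add_neg_cancel_left]
    · ext y
      simp only [Set.mem_image, Set.mem_setOf_eq]
      constructor
      · rintro ⟨x, hx, rfl⟩
        have hv : ZLex.idx ((GammaInterval.Gamma U hu).rneg x).1 =
            -(ZLex.idx x.1) + (n : ℤ) := by
          rw [GammaInterval.rneg_val U hu]; rfl
        rw [hv, hx]
        omega
      · intro hy
        have h1 : (0 : ZLex G) ≤ U + -y.1 := by
          simpa using add_le_add_right y.2.2 (-y.1)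
        have h2 : U + -y.1 ≤ U := by
          simpa using add_le_add_left (neg_nonpos.mpr y.2.1) U
        refine ⟨⟨U + -y.1, h1, h2⟩, ?_, ?_⟩
        · show ZLex.idx (U + -y.1) = (i : ℤ)
          have hv : ZLex.idx (U + -y.1) = (n : ℤ) + -(ZLex.idx y.1) := rfl
          have hy' : ZLex.idx y.1 = ((n - i : ℕ) : ℤ) := hy
          rw [hv, hy']
          omega
        · apply Subtype.ext
          refine (GammaInterval.rneg_val U hu _).trans ?_
          show -(U + -y.1) + U = y.1
          rw [neg_add_rev, neg_neg, neg_add_cancel_right]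
  · -- additivity
    intro i j hi hj x hx y hy hD
    have hx' : ZLex.idx x.1 = (i : ℤ) := hx
    have hy' : ZLex.idx y.1 = (j : ℤ) := hy
    have hidx : ZLex.idx (x.1 + y.1) = (i : ℤ) + (j : ℤ) := by
      show ZLex.idx x.1 + ZLex.idx y.1 = (i : ℤ) + (j : ℤ)
      rw [hx', hy']
    have hle : (i : ℤ) + (j : ℤ) ≤ (n : ℤ) := by
      have hD' : x.1 + y.1 ≤ U := hD
      rcases hD' with h | ⟨h, _⟩
      · rw [hidx] at h; exact le_of_lt h
      · rw [hidx] at h; exact le_of_eq h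
    refine ⟨by omega, ?_⟩
    show ZLex.idx (GammaInterval.gadd U hu x y).1 = ((i + j : ℕ) : ℤ)
    rw [GammaInterval.gadd_val U hu hD, hidx]
    omega
  · -- all sums with i + j < n defined
    intro i j hij x hx y hy
    have hx' : ZLex.idx x.1 = (i : ℤ) := hx
    have hy' : ZLex.idx y.1 = (j : ℤ) := hy
    show x.1 + y.1 ≤ U
    refine Or.inl ?_
    show ZLex.idx x.1 + ZLex.idx y.1 < (n : ℤ)
    rw [hx', hy']
    omega
  · -- F 0 is a maximal ideal
    refine ⟨hF0ideal, honeF0, ?_⟩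
    intro J hJ honeJ hsub
    ext x
    constructor
    · intro hx; exact hsub hx
    · intro hx
      show ZLex.idx x.1 = ((0 : ℕ) : ℤ)
      by_contra h
      have h1 : 1 ≤ ZLex.idx x.1 := by have := hmem_lower x; omega
      exact honeJ (key J hJ x hx h1)
  · -- uniqueness
    intro J hJ
    have hsub : J ⊆ {x : GammaSet U | ZLex.idx x.1 = ((0 : ℕ) : ℤ)} := by
      intro x hx
      show ZLex.idx x.1 = ((0 : ℕ) : ℤ)
      by_contra h
      have h1 : 1 ≤ ZLex.idx x.1 := by have := hmem_lower x; omega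
      exact hJ.2.1 (key J hJ.1 x hx h1)
    exact hJ.2.2 _ hF0ideal honeF0 hsub

/-- for a directed po-group `G`, the interval PEA
`Γ(ℤ ⃗× G, (n,0))` is an `n`-perfect PEA, with `n`-decomposition given by the
slices of constant first coordinate. -/
theorem stmt15 (G : Type) [AddGroup G] [PartialOrder G]
    [CovariantClass G G (· + ·) (· ≤ ·)]
    [CovariantClass G G (Function.swap (· + ·)) (· ≤ ·)]
    (hdir : ∀ a b : G, ∃ c : G, a ≤ c ∧ b ≤ c)
    (n : ℕ) (hn : 1 ≤ n)
    (P : PEA (GammaSet (ZLex.mk (n : ℤ) (0 : G))))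
    (hP : P = GammaInterval.Gamma (ZLex.mk (n : ℤ) (0 : G)) (by exact Or.inl (show (0 : ℤ) < (n : ℤ) by exact_mod_cast hn))) :
    P.IsNPerfect n
      (fun i => {x : GammaSet (ZLex.mk (n : ℤ) (0 : G)) | ZLex.idx x.1 = (i : ℤ)}) := by
  subst hP
  exact aux15 G hdir n hn _
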